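/- Let H be a t-partite 3-uniform hypergraph with vertex parts X₁,…,X_t (t ≥ 3). (i) For every cylinder chain partition P = (P_V, P_E) of H, the mean-squared density satisfies 0 ≤ q(P) ≤ C(t,3). (ii) If a cylinder chain partition P′ refines P, then q(P′) ≥ q(P). -/

import Mathlib

open scoped Classical

def twr : ℕ → ℕ → ℕ
  | 0, x => x
  | n + 1, x => 2 ^ twr n x

def tower (n : ℕ) : ℕ := twr n 1

variable {V : Type}

noncomputable def bipDensity [DecidableEq V] (Z : Finset (V × V)) (X Y : Finset V) : ℝ :=
  ((Z ∩ X ×ˢ Y).card : ℝ) / ((X.card : ℝ) * (Y.card : ℝ))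

def funcQuasi (X Y : Finset V) (f : V → V → ℝ) (α : ℝ) : Prop :=
  ∑ x ∈ X, ∑ x' ∈ X, ∑ y ∈ Y, ∑ y' ∈ Y, f x y * f x' y * f x y' * f x' y'
    ≤ α * (X.card : ℝ) ^ 2 * (Y.card : ℝ) ^ 2

def bipQuasi [DecidableEq V] (Z : Finset (V × V)) (X Y : Finset V) (α : ℝ) : Prop :=
  funcQuasi X Y (fun x y => (if (x, y) ∈ Z then (1 : ℝ) else 0) - bipDensity Z X Y) α

def triangles [DecidableEq V] (Z12 Z13 Z23 : Finset (V × V)) (Y1 Y2 Y3 : Finset V) :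
    Finset (V × V × V) :=
  (Y1 ×ˢ Y2 ×ˢ Y3).filter fun p =>
    (p.1, p.2.1) ∈ Z12 ∧ (p.1, p.2.2) ∈ Z13 ∧ (p.2.1, p.2.2) ∈ Z23

noncomputable def relDensity [DecidableEq V] (H : V → V → V → Prop)
    (Z12 Z13 Z23 : Finset (V × V)) (Y1 Y2 Y3 : Finset V) : ℝ :=
  (((triangles Z12 Z13 Z23 Y1 Y2 Y3).filter fun p => H p.1 p.2.1 p.2.2).card : ℝ) /
    ((triangles Z12 Z13 Z23 Y1 Y2 Y3).card : ℝ)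

noncomputable def chainFn [DecidableEq V] (H : V → V → V → Prop)
    (Z12 Z13 Z23 : Finset (V × V)) (Y1 Y2 Y3 : Finset V) (x y z : V) : ℝ :=
  if (x, y, z) ∈ triangles Z12 Z13 Z23 Y1 Y2 Y3 then
    (if H x y z then (1 : ℝ) else 0) - relDensity H Z12 Z13 Z23 Y1 Y2 Y3
  else 0

def hQuasi [DecidableEq V] (H : V → V → V → Prop) (Z12 Z13 Z23 : Finset (V × V))
    (Y1 Y2 Y3 : Finset V) (η : ℝ) : Prop :=
  ∑ x ∈ Y1, ∑ x' ∈ Y1, ∑ y ∈ Y2, ∑ y' ∈ Y2, ∑ z ∈ Y3, ∑ z' ∈ Y3,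
      chainFn H Z12 Z13 Z23 Y1 Y2 Y3 x y z * chainFn H Z12 Z13 Z23 Y1 Y2 Y3 x y z' *
        chainFn H Z12 Z13 Z23 Y1 Y2 Y3 x y' z * chainFn H Z12 Z13 Z23 Y1 Y2 Y3 x y' z' *
        chainFn H Z12 Z13 Z23 Y1 Y2 Y3 x' y z * chainFn H Z12 Z13 Z23 Y1 Y2 Y3 x' y z' *
        chainFn H Z12 Z13 Z23 Y1 Y2 Y3 x' y' z * chainFn H Z12 Z13 Z23 Y1 Y2 Y3 x' y' z'
    ≤ η * (bipDensity Z12 Y1 Y2 * bipDensity Z13 Y1 Y3 * bipDensity Z23 Y2 Y3) ^ 4 *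
        (Y1.card : ℝ) ^ 2 * (Y2.card : ℝ) ^ 2 * (Y3.card : ℝ) ^ 2

noncomputable def triProdDensity [DecidableEq V] (Z12 Z13 Z23 : Finset (V × V))
    (Y1 Y2 Y3 : Finset V) : ℝ :=
  bipDensity Z12 Y1 Y2 * bipDensity Z13 Y1 Y3 * bipDensity Z23 Y2 Y3

def triGraphQuasi [DecidableEq V] (Z12 Z13 Z23 : Finset (V × V)) (Y1 Y2 Y3 : Finset V)
    (α : ℝ) : Prop :=
  bipQuasi Z12 Y1 Y2 α ∧ bipQuasi Z13 Y1 Y3 α ∧ bipQuasi Z23 Y2 Y3 α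

def triChainQuasi [DecidableEq V] (H : V → V → V → Prop) (Z12 Z13 Z23 : Finset (V × V))
    (Y1 Y2 Y3 : Finset V) (η : ℝ) (ψ : ℝ → ℝ) : Prop :=
  hQuasi H Z12 Z13 Z23 Y1 Y2 Y3 η ∧
    triGraphQuasi Z12 Z13 Z23 Y1 Y2 Y3 (ψ (triProdDensity Z12 Z13 Z23 Y1 Y2 Y3))

def IsPolyFn (ψ : ℝ → ℝ) : Prop :=
  ∃ c : ℝ, ∃ k : ℕ, 0 < c ∧ 1 ≤ k ∧ ∀ x : ℝ, ψ x = c * x ^ k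

def IsVertexPartition (P : Finset (Finset V)) (S : Finset V) : Prop :=
  (∀ Y ∈ P, Y ⊆ S) ∧ ∀ x ∈ S, ∃! Y, Y ∈ P ∧ x ∈ Y

def IsSubPartition [DecidableEq V] (P : Finset (Finset (V × V))) (E : Finset (V × V)) : Prop :=
  (∀ Z ∈ P, Z ⊆ E) ∧ ∀ e ∈ E, ∃! Z, Z ∈ P ∧ e ∈ Z

def IsBipPartition [DecidableEq V] (P : Finset (Finset (V × V))) (X Y : Finset V) : Prop :=
  IsSubPartition P (X ×ˢ Y)

def Is3Graph (H : Finset (Finset V)) : Prop := ∀ e ∈ H, e.card = 3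

def hPred [DecidableEq V] (H : Finset (Finset V)) (x y z : V) : Prop :=
  ({x, y, z} : Finset V) ∈ H

def HasShattered [DecidableEq V] (H : Finset (Finset V)) (d : ℕ) : Prop :=
  ∃ A B : Finset V, Disjoint A B ∧ A.card = d ∧ B.card = d ∧
    ∀ S ⊆ A ×ˢ B, ∃ v : V, ∀ a ∈ A, ∀ b ∈ B, (({a, b, v} : Finset V) ∈ H ↔ (a, b) ∈ S)

def VC2dimLE [DecidableEq V] (H : Finset (Finset V)) (d : ℕ) : Prop := ¬ HasShattered H (d + 1)

def IsChainPartition [Fintype V] [DecidableEq V] (QV : Finset (Finset V))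
    (QE : Finset V → Finset V → Finset (Finset (V × V))) : Prop :=
  IsVertexPartition QV Finset.univ ∧
    ∀ Y ∈ QV, ∀ Y' ∈ QV, Y ≠ Y' → IsBipPartition (QE Y Y') Y Y'

def IsCylPartition {t : ℕ} [DecidableEq V] (PV : Finset (Fin t → Finset V))
    (X : Fin t → Finset V) : Prop :=
  (∀ Y ∈ PV, ∀ i, Y i ⊆ X i) ∧
    ∀ x ∈ Fintype.piFinset X, ∃! Y, Y ∈ PV ∧ ∀ i, x i ∈ Y i

def tGraphQuasi {t : ℕ} [DecidableEq V] (Z : Fin t → Fin t → Finset (V × V))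
    (Y : Fin t → Finset V) (α : ℝ) : Prop :=
  ∀ i j : Fin t, i < j → bipQuasi (Z i j) (Y i) (Y j) α

noncomputable def prodDensity {t : ℕ} [DecidableEq V] (Z : Fin t → Fin t → Finset (V × V))
    (Y : Fin t → Finset V) : ℝ :=
  ∏ p ∈ Finset.univ.filter (fun p : Fin t × Fin t => p.1 < p.2),
    bipDensity (Z p.1 p.2) (Y p.1) (Y p.2)

def tChainQuasi {t : ℕ} [DecidableEq V] (H : V → V → V → Prop)
    (Z : Fin t → Fin t → Finset (V × V)) (Y : Fin t → Finset V) (η : ℝ) (ψ : ℝ → ℝ) : Prop :=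
  (∀ i j k : Fin t, i < j → j < k →
      hQuasi H (Z i j) (Z i k) (Z j k) (Y i) (Y j) (Y k) η) ∧
    tGraphQuasi Z Y (ψ (prodDensity Z Y))


/-- Mean-squared density of an edge partition of the complete tripartite graph
on parts `Yi, Yj, Yk` (so that `|Δ(K)| = |Yi||Yj||Yk|`). -/
noncomputable def meanSqK {V : Type} [DecidableEq V] (H : V → V → V → Prop) (Yi Yj Yk : Finset V)
    (Pij Pik Pjk : Finset (Finset (V × V))) : ℝ :=
  ∑ Zij ∈ Pij, ∑ Zik ∈ Pik, ∑ Zjk ∈ Pjk,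
    (((triangles Zij Zik Zjk Yi Yj Yk).card : ℝ) /
        ((Yi.card : ℝ) * (Yj.card : ℝ) * (Yk.card : ℝ))) *
      relDensity H Zij Zik Zjk Yi Yj Yk ^ 2

/-- Mean-squared density of a cylinder chain partition. -/
noncomputable def qP {V : Type} {t : ℕ} [DecidableEq V] (H : V → V → V → Prop)
    (X : Fin t → Finset V) (PV : Finset (Fin t → Finset V))
    (PE : (Fin t → Finset V) → Fin t → Fin t → Finset (Finset (V × V))) : ℝ :=
  ∑ Y ∈ PV, (∏ i, ((Y i).card : ℝ) / ((X i).card : ℝ)) *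
    ∑ p ∈ Finset.univ.filter (fun p : Fin t × Fin t × Fin t => p.1 < p.2.1 ∧ p.2.1 < p.2.2),
      meanSqK H (Y p.1) (Y p.2.1) (Y p.2.2)
        (PE Y p.1 p.2.1) (PE Y p.1 p.2.2) (PE Y p.2.1 p.2.2)

/-- Refinement of cylinder chain partitions. -/
def CylRefines {V : Type} {t : ℕ} [DecidableEq V] (PV' PV : Finset (Fin t → Finset V))
    (PE' PE : (Fin t → Finset V) → Fin t → Fin t → Finset (Finset (V × V))) : Prop :=
  (∀ Y' ∈ PV', ∃ Y ∈ PV, ∀ i, Y' i ⊆ Y i) ∧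
    ∀ Y' ∈ PV', ∀ Y ∈ PV, (∀ i, Y' i ⊆ Y i) →
      ∀ i j : Fin t, i < j → ∀ Z' ∈ PE' Y' i j, ∃ Z ∈ PE Y i j, Z' ⊆ Z

section AuxGeneric
variable {α β : Type*}

lemma sum_partition [DecidableEq α] (T : Finset α) (I : Finset β) (part : β → Finset α)
    (hsub : ∀ b ∈ I, part b ⊆ T) (hex : ∀ x ∈ T, ∃! b, b ∈ I ∧ x ∈ part b)
    (F : α → ℝ) : ∑ x ∈ T, F x = ∑ b ∈ I, ∑ x ∈ part b, F x := by
  have hT : T = I.biUnion part := by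
    ext x
    simp only [Finset.mem_biUnion]
    constructor
    · intro hx; obtain ⟨b, hb, -⟩ := hex x hx; exact ⟨b, hb.1, hb.2⟩
    · rintro ⟨b, hb, hxb⟩; exact hsub b hb hxb
  rw [hT, Finset.sum_biUnion]
  intro b hb b' hb' hne
  simp only [Finset.mem_coe] at hb hb'
  show Disjoint (part b) (part b')
  refine Finset.disjoint_left.mpr ?_
  intro x hxb hxb'
  have hxT : x ∈ T := hsub b hb hxb
  obtain ⟨c, -, hcu⟩ := hex x hxT
  exact hne ((hcu b ⟨hb, hxb⟩).trans (hcu b' ⟨hb', hxb'⟩).symm)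

lemma sum_avg_blocks [DecidableEq α] (S : Finset α) (B : α → Finset α) (φ : α → ℝ)
    (hmem : ∀ x ∈ S, x ∈ B x) (hsub : ∀ x ∈ S, B x ⊆ S)
    (hcst : ∀ x ∈ S, ∀ y ∈ B x, B y = B x) :
    ∑ x ∈ S, (∑ y ∈ B x, φ y) / ((B x).card : ℝ) = ∑ y ∈ S, φ y := by
  have key : ∀ x ∈ S, (∑ y ∈ B x, φ y) / ((B x).card : ℝ)
      = ∑ y ∈ S, if y ∈ B x then φ y / ((B y).card : ℝ) else 0 := by
    intro x hx
    rw [← Finset.sum_filter]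
    have h1 : S.filter (· ∈ B x) = B x := by
      ext y
      simp only [Finset.mem_filter]
      exact ⟨fun h => h.2, fun h => ⟨hsub x hx h, h⟩⟩
    rw [h1]
    rw [Finset.sum_div]
    refine Finset.sum_congr rfl fun y hy => ?_
    rw [hcst x hx y hy]
  calc ∑ x ∈ S, (∑ y ∈ B x, φ y) / ((B x).card : ℝ)
      = ∑ x ∈ S, ∑ y ∈ S, (if y ∈ B x then φ y / ((B y).card : ℝ) else 0) :=
        Finset.sum_congr rfl key
    _ = ∑ y ∈ S, ∑ x ∈ S, (if y ∈ B x then φ y / ((B y).card : ℝ) else 0) := Finset.sum_comm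
    _ = ∑ y ∈ S, φ y := by
        refine Finset.sum_congr rfl fun y hy => ?_
        have hiff : S.filter (fun x => y ∈ B x) = B y := by
          ext x
          simp only [Finset.mem_filter]
          constructor
          · rintro ⟨hxS, hyBx⟩
            have h := hcst x hxS y hyBx
            rw [h]; exact hmem x hxS
          · intro hxBy
            have hxS : x ∈ S := hsub y hy hxBy
            have h := hcst y hy x hxBy
            exact ⟨hxS, h ▸ hmem y hy⟩
        rw [← Finset.sum_filter, hiff, Finset.sum_const, nsmul_eq_mul]
        have hc : ((B y).card : ℝ) ≠ 0 := by
          have h1 : y ∈ B y := hmem y hy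
          have h2 : 0 < (B y).card := Finset.card_pos.mpr ⟨y, h1⟩
          exact_mod_cast h2.ne'
        field_simp

lemma refine_sq_le [DecidableEq α] (S : Finset α) (f : α → ℝ) (B B' : α → Finset α)
    (hmem : ∀ x ∈ S, x ∈ B x) (hsub : ∀ x ∈ S, B x ⊆ S)
    (hcst : ∀ x ∈ S, ∀ y ∈ B x, B y = B x)
    (hmem' : ∀ x ∈ S, x ∈ B' x)
    (hcst' : ∀ x ∈ S, ∀ y ∈ B' x, B' y = B' x)
    (href : ∀ x ∈ S, B' x ⊆ B x) :
    ∑ x ∈ S, ((∑ y ∈ B x, f y) / ((B x).card : ℝ)) ^ 2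
      ≤ ∑ x ∈ S, ((∑ y ∈ B' x, f y) / ((B' x).card : ℝ)) ^ 2 := by
  set g := fun x => (∑ y ∈ B' x, f y) / ((B' x).card : ℝ) with hg
  have hstep1 : ∀ x ∈ S, ∑ y ∈ B x, g y = ∑ y ∈ B x, f y := by
    intro x hx
    refine sum_avg_blocks (B x) B' f ?_ ?_ ?_
    · exact fun y hy => hmem' y (hsub x hx hy)
    · intro y hy
      exact (hcst x hx y hy) ▸ href y (hsub x hx hy)
    · intro y hy z hz
      exact hcst' y (hsub x hx hy) z hz
  have hstep2 : ∀ x ∈ S, ((∑ y ∈ B x, f y) / ((B x).card : ℝ)) ^ 2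
      ≤ (∑ y ∈ B x, g y ^ 2) / ((B x).card : ℝ) := by
    intro x hx
    rw [← hstep1 x hx, div_pow]
    have hcard : (0:ℝ) < ((B x).card : ℝ) := by
      have h : 0 < (B x).card := Finset.card_pos.mpr ⟨x, hmem x hx⟩
      exact_mod_cast h
    have hCS : (∑ y ∈ B x, g y) ^ 2 ≤ ((B x).card : ℝ) * ∑ y ∈ B x, g y ^ 2 := by
      have h := Finset.sum_mul_sq_le_sq_mul_sq (B x) (fun _ => (1:ℝ)) g
      simpa using h
    rw [div_le_div_iff₀ (by positivity) hcard]
    calc (∑ y ∈ B x, g y) ^ 2 * ((B x).card : ℝ)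
        ≤ (((B x).card : ℝ) * ∑ y ∈ B x, g y ^ 2) * ((B x).card : ℝ) :=
          mul_le_mul_of_nonneg_right hCS hcard.le
      _ = (∑ y ∈ B x, g y ^ 2) * ((B x).card : ℝ) ^ 2 := by ring
  calc ∑ x ∈ S, ((∑ y ∈ B x, f y) / ((B x).card : ℝ)) ^ 2
      ≤ ∑ x ∈ S, (∑ y ∈ B x, g y ^ 2) / ((B x).card : ℝ) := Finset.sum_le_sum hstep2
    _ = ∑ y ∈ S, g y ^ 2 := sum_avg_blocks S B (fun y => g y ^ 2) hmem hsub hcst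

end AuxGeneric

section AuxPi
variable {α : Type*} [DecidableEq α] [Fintype α] {n : ℕ}

lemma sum_piFinset_slice (Y : Fin n → Finset α) (i : Fin n) (F : (Fin n → α) → ℝ) :
    ∑ x ∈ Fintype.piFinset Y, F x
      = ∑ a ∈ Y i, ∑ x ∈ Fintype.piFinset (Function.update Y i {a}), F x := by
  refine sum_partition _ _ _ ?_ ?_ F
  · intro a ha x hx
    rw [Fintype.mem_piFinset] at hx ⊢
    intro l
    rcases eq_or_ne l i with rfl | hl
    · have h := hx l
      rw [Function.update_self, Finset.mem_singleton] at h
      rw [h]; exact ha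
    · have h := hx l
      rwa [Function.update_of_ne hl] at h
  · intro x hx
    rw [Fintype.mem_piFinset] at hx
    refine ⟨x i, ⟨hx i, ?_⟩, ?_⟩
    · rw [Fintype.mem_piFinset]
      intro l
      rcases eq_or_ne l i with rfl | hl
      · simp
      · rw [Function.update_of_ne hl]; exact hx l
    · rintro a ⟨ha, hxa⟩
      rw [Fintype.mem_piFinset] at hxa
      have h := hxa i
      rw [Function.update_self, Finset.mem_singleton] at h
      exact h.symm

lemma sum_piFinset_triple (Y : Fin n → Finset α) (i j k : Fin n)
    (hij : i ≠ j) (hik : i ≠ k) (hjk : j ≠ k) (g : α → α → α → ℝ) :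
    ∑ x ∈ Fintype.piFinset Y, g (x i) (x j) (x k)
      = (∏ l ∈ ({i, j, k} : Finset (Fin n))ᶜ, ((Y l).card : ℝ)) *
          ∑ a ∈ Y i, ∑ b ∈ Y j, ∑ c ∈ Y k, g a b c := by
  rw [sum_piFinset_slice Y i (fun x => g (x i) (x j) (x k)), Finset.mul_sum]
  refine Finset.sum_congr rfl fun a ha => ?_
  rw [sum_piFinset_slice _ j (fun x => g (x i) (x j) (x k)), Finset.mul_sum]
  have hYj : Function.update Y i {a} j = Y j := Function.update_of_ne hij.symm _ _
  rw [hYj]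
  refine Finset.sum_congr rfl fun b hb => ?_
  rw [sum_piFinset_slice _ k (fun x => g (x i) (x j) (x k)), Finset.mul_sum]
  have hYk : Function.update (Function.update Y i {a}) j {b} k = Y k := by
    rw [Function.update_of_ne hjk.symm, Function.update_of_ne hik.symm]
  rw [hYk]
  refine Finset.sum_congr rfl fun c hc => ?_
  set Y3 := Function.update (Function.update (Function.update Y i {a}) j {b}) k {c} with hY3
  have hconst : ∀ x ∈ Fintype.piFinset Y3, g (x i) (x j) (x k) = g a b c := by
    intro x hx
    rw [Fintype.mem_piFinset] at hx
    have hxi : x i = a := by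
      have h := hx i
      rw [hY3, Function.update_of_ne hik, Function.update_of_ne hij,
        Function.update_self, Finset.mem_singleton] at h
      exact h
    have hxj : x j = b := by
      have h := hx j
      rw [hY3, Function.update_of_ne hjk, Function.update_self, Finset.mem_singleton] at h
      exact h
    have hxk : x k = c := by
      have h := hx k
      rw [hY3, Function.update_self, Finset.mem_singleton] at h
      exact h
    rw [hxi, hxj, hxk]
  rw [Finset.sum_congr rfl hconst, Finset.sum_const, nsmul_eq_mul,
    Fintype.card_piFinset]
  congr 1
  have hsplit := Finset.prod_mul_prod_compl ({i, j, k} : Finset (Fin n))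
    (fun l => ((Y3 l).card : ℝ))
  have hone : ∏ l ∈ ({i, j, k} : Finset (Fin n)), ((Y3 l).card : ℝ) = 1 := by
    refine Finset.prod_eq_one fun l hl => ?_
    simp only [Finset.mem_insert, Finset.mem_singleton] at hl
    rcases hl with rfl | rfl | rfl
    · rw [hY3, Function.update_of_ne hik, Function.update_of_ne hij, Function.update_self]
      simp
    · rw [hY3, Function.update_of_ne hjk, Function.update_self]; simp
    · rw [hY3, Function.update_self]; simp
  have hcompl : ∏ l ∈ ({i, j, k} : Finset (Fin n))ᶜ, ((Y3 l).card : ℝ)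
      = ∏ l ∈ ({i, j, k} : Finset (Fin n))ᶜ, ((Y l).card : ℝ) := by
    refine Finset.prod_congr rfl fun l hl => ?_
    simp only [Finset.mem_compl, Finset.mem_insert, Finset.mem_singleton, not_or] at hl
    rw [hY3, Function.update_of_ne hl.2.2, Function.update_of_ne hl.2.1,
      Function.update_of_ne hl.1]
  push_cast
  rw [← hsplit, hone, one_mul, hcompl]

end AuxPi
section AuxBlock
variable {V : Type} [DecidableEq V] [Fintype V] {t : ℕ}

noncomputable def cylOf (PV : Finset (Fin t → Finset V)) (x : Fin t → V) : Fin t → Finset V :=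
  if h : ∃ Y, Y ∈ PV ∧ ∀ i, x i ∈ Y i then h.choose else fun _ => ∅

noncomputable def cellOf (P : Finset (Finset (V × V))) (e : V × V) : Finset (V × V) :=
  if h : ∃ Z, Z ∈ P ∧ e ∈ Z then h.choose else ∅

lemma cylOf_spec {PV : Finset (Fin t → Finset V)} {X : Fin t → Finset V}
    (hPV : IsCylPartition PV X) {x : Fin t → V} (hx : x ∈ Fintype.piFinset X) :
    (cylOf PV x ∈ PV ∧ ∀ i, x i ∈ cylOf PV x i) ∧
      ∀ Y ∈ PV, (∀ i, x i ∈ Y i) → Y = cylOf PV x := by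
  obtain ⟨Y, hY, hu⟩ := hPV.2 x hx
  have h : ∃ Y, Y ∈ PV ∧ ∀ i, x i ∈ Y i := ⟨Y, hY⟩
  have e : cylOf PV x = h.choose := dif_pos h
  rw [e]
  exact ⟨h.choose_spec, fun Y' hY' hx' =>
    (hu Y' ⟨hY', hx'⟩).trans (hu h.choose h.choose_spec).symm⟩

lemma cellOf_spec {P : Finset (Finset (V × V))} {E : Finset (V × V)}
    (hP : IsSubPartition P E) {e : V × V} (he : e ∈ E) :
    (cellOf P e ∈ P ∧ e ∈ cellOf P e) ∧ ∀ Z ∈ P, e ∈ Z → Z = cellOf P e := by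
  obtain ⟨Z, hZ, hu⟩ := hP.2 e he
  have h : ∃ Z, Z ∈ P ∧ e ∈ Z := ⟨Z, hZ⟩
  have e' : cellOf P e = h.choose := dif_pos h
  rw [e']
  exact ⟨h.choose_spec, fun Z' hZ' he' =>
    (hu Z' ⟨hZ', he'⟩).trans (hu h.choose h.choose_spec).symm⟩

noncomputable def cellBlock (Y : Fin t → Finset V) (i j k : Fin t)
    (Zij Zik Zjk : Finset (V × V)) : Finset (Fin t → V) :=
  (Fintype.piFinset Y).filter fun y =>
    (y i, y j) ∈ Zij ∧ (y i, y k) ∈ Zik ∧ (y j, y k) ∈ Zjk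

noncomputable def blockOf (PV : Finset (Fin t → Finset V))
    (PE : (Fin t → Finset V) → Fin t → Fin t → Finset (Finset (V × V)))
    (i j k : Fin t) (x : Fin t → V) : Finset (Fin t → V) :=
  cellBlock (cylOf PV x) i j k
    (cellOf (PE (cylOf PV x) i j) (x i, x j))
    (cellOf (PE (cylOf PV x) i k) (x i, x k))
    (cellOf (PE (cylOf PV x) j k) (x j, x k))

lemma blockOf_eq_cellBlock {X : Fin t → Finset V} {PV : Finset (Fin t → Finset V)}
    {PE : (Fin t → Finset V) → Fin t → Fin t → Finset (Finset (V × V))}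
    (hPV : IsCylPartition PV X)
    (hPE : ∀ Y ∈ PV, ∀ i j : Fin t, i < j → IsBipPartition (PE Y i j) (Y i) (Y j))
    {i j k : Fin t} (hij : i < j) (hjk : j < k)
    {Y : Fin t → Finset V} (hY : Y ∈ PV)
    {Zij Zik Zjk : Finset (V × V)}
    (hZij : Zij ∈ PE Y i j) (hZik : Zik ∈ PE Y i k) (hZjk : Zjk ∈ PE Y j k)
    {x : Fin t → V} (hx : x ∈ cellBlock Y i j k Zij Zik Zjk) :
    blockOf PV PE i j k x = cellBlock Y i j k Zij Zik Zjk := by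
  rw [cellBlock, Finset.mem_filter, Fintype.mem_piFinset] at hx
  obtain ⟨hxY, hxij, hxik, hxjk⟩ := hx
  have hxX : x ∈ Fintype.piFinset X := by
    rw [Fintype.mem_piFinset]
    exact fun l => hPV.1 Y hY l (hxY l)
  have hYe : Y = cylOf PV x := (cylOf_spec hPV hxX).2 Y hY hxY
  have hik : i < k := hij.trans hjk
  have hmij : (x i, x j) ∈ Y i ×ˢ Y j := Finset.mem_product.mpr ⟨hxY i, hxY j⟩
  have hmik : (x i, x k) ∈ Y i ×ˢ Y k := Finset.mem_product.mpr ⟨hxY i, hxY k⟩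
  have hmjk : (x j, x k) ∈ Y j ×ˢ Y k := Finset.mem_product.mpr ⟨hxY j, hxY k⟩
  have hZije : Zij = cellOf (PE Y i j) (x i, x j) :=
    (cellOf_spec (hPE Y hY i j hij) hmij).2 Zij hZij hxij
  have hZike : Zik = cellOf (PE Y i k) (x i, x k) :=
    (cellOf_spec (hPE Y hY i k hik) hmik).2 Zik hZik hxik
  have hZjke : Zjk = cellOf (PE Y j k) (x j, x k) :=
    (cellOf_spec (hPE Y hY j k hjk) hmjk).2 Zjk hZjk hxjk
  rw [blockOf, ← hYe, ← hZije, ← hZike, ← hZjke]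

lemma blockOf_self {X : Fin t → Finset V} {PV : Finset (Fin t → Finset V)}
    {PE : (Fin t → Finset V) → Fin t → Fin t → Finset (Finset (V × V))}
    (hPV : IsCylPartition PV X)
    (hPE : ∀ Y ∈ PV, ∀ i j : Fin t, i < j → IsBipPartition (PE Y i j) (Y i) (Y j))
    {i j k : Fin t} (hij : i < j) (hjk : j < k)
    {x : Fin t → V} (hx : x ∈ Fintype.piFinset X) :
    x ∈ blockOf PV PE i j k x := by
  have hik : i < k := hij.trans hjk
  obtain ⟨⟨hYmem, hxY⟩, -⟩ := cylOf_spec hPV hx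
  set Y := cylOf PV x with hYdef
  have hmij : (x i, x j) ∈ Y i ×ˢ Y j := Finset.mem_product.mpr ⟨hxY i, hxY j⟩
  have hmik : (x i, x k) ∈ Y i ×ˢ Y k := Finset.mem_product.mpr ⟨hxY i, hxY k⟩
  have hmjk : (x j, x k) ∈ Y j ×ˢ Y k := Finset.mem_product.mpr ⟨hxY j, hxY k⟩
  rw [blockOf, cellBlock, Finset.mem_filter, Fintype.mem_piFinset]
  exact ⟨hxY, (cellOf_spec (hPE Y hYmem i j hij) hmij).1.2,
    (cellOf_spec (hPE Y hYmem i k hik) hmik).1.2,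
    (cellOf_spec (hPE Y hYmem j k hjk) hmjk).1.2⟩

lemma blockOf_subset {X : Fin t → Finset V} {PV : Finset (Fin t → Finset V)}
    {PE : (Fin t → Finset V) → Fin t → Fin t → Finset (Finset (V × V))}
    (hPV : IsCylPartition PV X)
    {i j k : Fin t} {x : Fin t → V} (hx : x ∈ Fintype.piFinset X) :
    blockOf PV PE i j k x ⊆ Fintype.piFinset X := by
  obtain ⟨⟨hYmem, -⟩, -⟩ := cylOf_spec hPV hx
  intro y hy
  rw [blockOf, cellBlock, Finset.mem_filter, Fintype.mem_piFinset] at hy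
  rw [Fintype.mem_piFinset]
  exact fun l => hPV.1 _ hYmem l (hy.1 l)

lemma blockOf_const {X : Fin t → Finset V} {PV : Finset (Fin t → Finset V)}
    {PE : (Fin t → Finset V) → Fin t → Fin t → Finset (Finset (V × V))}
    (hPV : IsCylPartition PV X)
    (hPE : ∀ Y ∈ PV, ∀ i j : Fin t, i < j → IsBipPartition (PE Y i j) (Y i) (Y j))
    {i j k : Fin t} (hij : i < j) (hjk : j < k)
    {x : Fin t → V} (hx : x ∈ Fintype.piFinset X)
    {y : Fin t → V} (hy : y ∈ blockOf PV PE i j k x) :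
    blockOf PV PE i j k y = blockOf PV PE i j k x := by
  have hik : i < k := hij.trans hjk
  obtain ⟨⟨hYmem, hxY⟩, -⟩ := cylOf_spec hPV hx
  set Y := cylOf PV x with hYdef
  have hmij : (x i, x j) ∈ Y i ×ˢ Y j := Finset.mem_product.mpr ⟨hxY i, hxY j⟩
  have hmik : (x i, x k) ∈ Y i ×ˢ Y k := Finset.mem_product.mpr ⟨hxY i, hxY k⟩
  have hmjk : (x j, x k) ∈ Y j ×ˢ Y k := Finset.mem_product.mpr ⟨hxY j, hxY k⟩
  exact blockOf_eq_cellBlock hPV hPE hij hjk hYmem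
    (cellOf_spec (hPE Y hYmem i j hij) hmij).1.1
    (cellOf_spec (hPE Y hYmem i k hik) hmik).1.1
    (cellOf_spec (hPE Y hYmem j k hjk) hmjk).1.1 hy

lemma blockOf_refine {X : Fin t → Finset V} {PV PV' : Finset (Fin t → Finset V)}
    {PE PE' : (Fin t → Finset V) → Fin t → Fin t → Finset (Finset (V × V))}
    (hPV : IsCylPartition PV X)
    (hPE : ∀ Y ∈ PV, ∀ i j : Fin t, i < j → IsBipPartition (PE Y i j) (Y i) (Y j))
    (hPV' : IsCylPartition PV' X)
    (hPE' : ∀ Y ∈ PV', ∀ i j : Fin t, i < j → IsBipPartition (PE' Y i j) (Y i) (Y j))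
    (href : CylRefines PV' PV PE' PE)
    {i j k : Fin t} (hij : i < j) (hjk : j < k)
    {x : Fin t → V} (hx : x ∈ Fintype.piFinset X) :
    blockOf PV' PE' i j k x ⊆ blockOf PV PE i j k x := by
  have hik : i < k := hij.trans hjk
  obtain ⟨⟨hY'mem, hxY'⟩, -⟩ := cylOf_spec hPV' hx
  set Y' := cylOf PV' x with hY'def
  obtain ⟨Y, hYmem, hYsub⟩ := href.1 Y' hY'mem
  have hxY : ∀ l, x l ∈ Y l := fun l => hYsub l (hxY' l)
  have hYe : Y = cylOf PV x := (cylOf_spec hPV hx).2 Y hYmem hxY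
  have hcell : ∀ (p q : Fin t), p < q →
      ∃ Z ∈ PE Y p q, (x p, x q) ∈ Z ∧ cellOf (PE' Y' p q) (x p, x q) ⊆ Z ∧
        Z = cellOf (PE Y p q) (x p, x q) := by
    intro p q hpq
    have hm' : (x p, x q) ∈ Y' p ×ˢ Y' q := Finset.mem_product.mpr ⟨hxY' p, hxY' q⟩
    have hZ' := cellOf_spec (hPE' Y' hY'mem p q hpq) hm'
    obtain ⟨Z, hZmem, hZsub⟩ := href.2 Y' hY'mem Y hYmem hYsub p q hpq
      (cellOf (PE' Y' p q) (x p, x q)) hZ'.1.1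
    have hxZ : (x p, x q) ∈ Z := hZsub hZ'.1.2
    have hm : (x p, x q) ∈ Y p ×ˢ Y q := Finset.mem_product.mpr ⟨hxY p, hxY q⟩
    exact ⟨Z, hZmem, hxZ, hZsub, (cellOf_spec (hPE Y hYmem p q hpq) hm).2 Z hZmem hxZ⟩
  obtain ⟨Zij, -, -, hsubij, heij⟩ := hcell i j hij
  obtain ⟨Zik, -, -, hsubik, heik⟩ := hcell i k hik
  obtain ⟨Zjk, -, -, hsubjk, hejk⟩ := hcell j k hjk
  intro y hy
  rw [blockOf, cellBlock, Finset.mem_filter, Fintype.mem_piFinset] at hy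
  rw [blockOf, cellBlock, Finset.mem_filter, Fintype.mem_piFinset, ← hYe,
    ← heij, ← heik, ← hejk]
  exact ⟨fun l => hYsub l (hy.1 l), hsubij hy.2.1, hsubik hy.2.2.1, hsubjk hy.2.2.2⟩

end AuxBlock
section AuxCount
variable {V : Type} [DecidableEq V] [Fintype V] {t : ℕ}

lemma triangles_card_cast (Zij Zik Zjk : Finset (V × V)) (A B C : Finset V) :
    ((triangles Zij Zik Zjk A B C).card : ℝ)
      = ∑ a ∈ A, ∑ b ∈ B, ∑ c ∈ C,
          (if (a, b) ∈ Zij ∧ (a, c) ∈ Zik ∧ (b, c) ∈ Zjk then (1 : ℝ) else 0) := by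
  rw [triangles, Finset.card_filter]
  push_cast
  rw [Finset.sum_product]
  refine Finset.sum_congr rfl fun a _ => ?_
  rw [Finset.sum_product]

lemma trianglesH_card_cast (H : V → V → V → Prop) (Zij Zik Zjk : Finset (V × V))
    (A B C : Finset V) :
    (((triangles Zij Zik Zjk A B C).filter fun p => H p.1 p.2.1 p.2.2).card : ℝ)
      = ∑ a ∈ A, ∑ b ∈ B, ∑ c ∈ C,
          (if ((a, b) ∈ Zij ∧ (a, c) ∈ Zik ∧ (b, c) ∈ Zjk) ∧ H a b c then (1 : ℝ) else 0) := by
  rw [triangles, Finset.filter_filter, Finset.card_filter]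
  push_cast
  rw [Finset.sum_product]
  refine Finset.sum_congr rfl fun a _ => ?_
  rw [Finset.sum_product]

lemma cellBlock_card (Y : Fin t → Finset V) {i j k : Fin t}
    (hij : i ≠ j) (hik : i ≠ k) (hjk : j ≠ k) (Zij Zik Zjk : Finset (V × V)) :
    ((cellBlock Y i j k Zij Zik Zjk).card : ℝ)
      = (∏ l ∈ ({i, j, k} : Finset (Fin t))ᶜ, ((Y l).card : ℝ)) *
        ((triangles Zij Zik Zjk (Y i) (Y j) (Y k)).card : ℝ) := by
  have h1 : ((cellBlock Y i j k Zij Zik Zjk).card : ℝ)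
      = ∑ x ∈ Fintype.piFinset Y,
          (if (x i, x j) ∈ Zij ∧ (x i, x k) ∈ Zik ∧ (x j, x k) ∈ Zjk then (1:ℝ) else 0) := by
    rw [cellBlock, Finset.card_filter]
    push_cast
    rfl
  rw [h1, sum_piFinset_triple Y i j k hij hik hjk
    (fun a b c => if (a, b) ∈ Zij ∧ (a, c) ∈ Zik ∧ (b, c) ∈ Zjk then (1:ℝ) else 0),
    triangles_card_cast]

lemma cellBlock_sumH (H : V → V → V → Prop) (Y : Fin t → Finset V) {i j k : Fin t}
    (hij : i ≠ j) (hik : i ≠ k) (hjk : j ≠ k) (Zij Zik Zjk : Finset (V × V)) :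
    ∑ y ∈ cellBlock Y i j k Zij Zik Zjk, (if H (y i) (y j) (y k) then (1:ℝ) else 0)
      = (∏ l ∈ ({i, j, k} : Finset (Fin t))ᶜ, ((Y l).card : ℝ)) *
        (((triangles Zij Zik Zjk (Y i) (Y j) (Y k)).filter
            fun p => H p.1 p.2.1 p.2.2).card : ℝ) := by
  have h1 : ∑ y ∈ cellBlock Y i j k Zij Zik Zjk, (if H (y i) (y j) (y k) then (1:ℝ) else 0)
      = ∑ x ∈ Fintype.piFinset Y,
          (if ((x i, x j) ∈ Zij ∧ (x i, x k) ∈ Zik ∧ (x j, x k) ∈ Zjk) ∧ H (x i) (x j) (x k)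
            then (1:ℝ) else 0) := by
    rw [cellBlock, Finset.sum_filter]
    refine Finset.sum_congr rfl fun x _ => ?_
    by_cases hc : (x i, x j) ∈ Zij ∧ (x i, x k) ∈ Zik ∧ (x j, x k) ∈ Zjk
    · rw [if_pos hc]
      by_cases hH : H (x i) (x j) (x k)
      · rw [if_pos hH, if_pos ⟨hc, hH⟩]
      · rw [if_neg hH, if_neg (fun h => hH h.2)]
    · rw [if_neg hc, if_neg (fun h => hc h.1)]
  rw [h1, sum_piFinset_triple Y i j k hij hik hjk
    (fun a b c => if ((a, b) ∈ Zij ∧ (a, c) ∈ Zik ∧ (b, c) ∈ Zjk) ∧ H a b c then (1:ℝ) else 0),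
    trianglesH_card_cast]

lemma relDensity_nonneg (H : V → V → V → Prop) (Zij Zik Zjk : Finset (V × V))
    (A B C : Finset V) : 0 ≤ relDensity H Zij Zik Zjk A B C :=
  div_nonneg (Nat.cast_nonneg _) (Nat.cast_nonneg _)

lemma relDensity_le_one (H : V → V → V → Prop) (Zij Zik Zjk : Finset (V × V))
    (A B C : Finset V) : relDensity H Zij Zik Zjk A B C ≤ 1 :=
  div_le_one_of_le₀ (Nat.cast_le.mpr (Finset.card_filter_le _ _)) (Nat.cast_nonneg _)

lemma cells_exu {P1 P2 P3 : Finset (Finset (V × V))} {E1 E2 E3 : Finset (V × V)}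
    (h1 : IsSubPartition P1 E1) (h2 : IsSubPartition P2 E2) (h3 : IsSubPartition P3 E3)
    {e1 e2 e3 : V × V} (he1 : e1 ∈ E1) (he2 : e2 ∈ E2) (he3 : e3 ∈ E3) :
    ∃! Z : Finset (V × V) × Finset (V × V) × Finset (V × V),
      Z ∈ P1 ×ˢ P2 ×ˢ P3 ∧ (e1 ∈ Z.1 ∧ e2 ∈ Z.2.1 ∧ e3 ∈ Z.2.2) := by
  obtain ⟨Z1, hZ1, hu1⟩ := h1.2 e1 he1
  obtain ⟨Z2, hZ2, hu2⟩ := h2.2 e2 he2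
  obtain ⟨Z3, hZ3, hu3⟩ := h3.2 e3 he3
  refine ⟨(Z1, Z2, Z3), ⟨Finset.mem_product.mpr ⟨hZ1.1, Finset.mem_product.mpr
    ⟨hZ2.1, hZ3.1⟩⟩, hZ1.2, hZ2.2, hZ3.2⟩, ?_⟩
  rintro ⟨W1, W2, W3⟩ ⟨hWmem, hw1, hw2, hw3⟩
  rw [Finset.mem_product] at hWmem
  obtain ⟨hW1, hWmem2⟩ := hWmem
  rw [Finset.mem_product] at hWmem2
  obtain ⟨hW2, hW3⟩ := hWmem2
  have e1' : W1 = Z1 := hu1 W1 ⟨hW1, hw1⟩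
  have e2' : W2 = Z2 := hu2 W2 ⟨hW2, hw2⟩
  have e3' : W3 = Z3 := hu3 W3 ⟨hW3, hw3⟩
  simp [e1', e2', e3']

end AuxCount
section AuxIdentity
variable {V : Type} [DecidableEq V] [Fintype V] {t : ℕ}

lemma cellBlock_contrib (H : V → V → V → Prop) {X : Fin t → Finset V}
    {PV : Finset (Fin t → Finset V)}
    {PE : (Fin t → Finset V) → Fin t → Fin t → Finset (Finset (V × V))}
    (hPV : IsCylPartition PV X)
    (hPE : ∀ Y ∈ PV, ∀ i j : Fin t, i < j → IsBipPartition (PE Y i j) (Y i) (Y j))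
    {i j k : Fin t} (hij : i < j) (hjk : j < k)
    {Y : Fin t → Finset V} (hY : Y ∈ PV)
    {Zij Zik Zjk : Finset (V × V)}
    (hZij : Zij ∈ PE Y i j) (hZik : Zik ∈ PE Y i k) (hZjk : Zjk ∈ PE Y j k) :
    ∑ x ∈ cellBlock Y i j k Zij Zik Zjk,
        ((∑ y ∈ blockOf PV PE i j k x, (if H (y i) (y j) (y k) then (1:ℝ) else 0)) /
          ((blockOf PV PE i j k x).card : ℝ)) ^ 2
      = ((cellBlock Y i j k Zij Zik Zjk).card : ℝ) *
          relDensity H Zij Zik Zjk (Y i) (Y j) (Y k) ^ 2 := by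
  have hij' : i ≠ j := ne_of_lt hij
  have hik' : i ≠ k := ne_of_lt (hij.trans hjk)
  have hjk' : j ≠ k := ne_of_lt hjk
  set m := ∏ l ∈ ({i, j, k} : Finset (Fin t))ᶜ, ((Y l).card : ℝ) with hm
  by_cases hm0 : m = 0
  · have hcb : ((cellBlock Y i j k Zij Zik Zjk).card : ℝ) = 0 := by
      rw [cellBlock_card Y hij' hik' hjk', ← hm, hm0, zero_mul]
    have hempty : cellBlock Y i j k Zij Zik Zjk = ∅ := by
      rw [← Finset.card_eq_zero]
      exact_mod_cast hcb
    rw [hempty]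
    simp
  · have hconst : ∀ x ∈ cellBlock Y i j k Zij Zik Zjk,
        ((∑ y ∈ blockOf PV PE i j k x, (if H (y i) (y j) (y k) then (1:ℝ) else 0)) /
          ((blockOf PV PE i j k x).card : ℝ)) ^ 2
        = relDensity H Zij Zik Zjk (Y i) (Y j) (Y k) ^ 2 := by
      intro x hx
      rw [blockOf_eq_cellBlock hPV hPE hij hjk hY hZij hZik hZjk hx,
        cellBlock_sumH H Y hij' hik' hjk', cellBlock_card Y hij' hik' hjk', ← hm,
        mul_div_mul_left _ _ hm0, relDensity]
    rw [Finset.sum_congr rfl hconst, Finset.sum_const, nsmul_eq_mul]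

lemma sum_over_cylinder (H : V → V → V → Prop) {X : Fin t → Finset V}
    {PV : Finset (Fin t → Finset V)}
    {PE : (Fin t → Finset V) → Fin t → Fin t → Finset (Finset (V × V))}
    (hPV : IsCylPartition PV X)
    (hPE : ∀ Y ∈ PV, ∀ i j : Fin t, i < j → IsBipPartition (PE Y i j) (Y i) (Y j))
    {i j k : Fin t} (hij : i < j) (hjk : j < k)
    {Y : Fin t → Finset V} (hY : Y ∈ PV) :
    ∑ x ∈ Fintype.piFinset Y,
        ((∑ y ∈ blockOf PV PE i j k x, (if H (y i) (y j) (y k) then (1:ℝ) else 0)) /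
          ((blockOf PV PE i j k x).card : ℝ)) ^ 2
      = ∑ Zij ∈ PE Y i j, ∑ Zik ∈ PE Y i k, ∑ Zjk ∈ PE Y j k,
          ((cellBlock Y i j k Zij Zik Zjk).card : ℝ) *
            relDensity H Zij Zik Zjk (Y i) (Y j) (Y k) ^ 2 := by
  have hik : i < k := hij.trans hjk
  have hP : ∑ x ∈ Fintype.piFinset Y,
        ((∑ y ∈ blockOf PV PE i j k x, (if H (y i) (y j) (y k) then (1:ℝ) else 0)) /
          ((blockOf PV PE i j k x).card : ℝ)) ^ 2
      = ∑ Z ∈ (PE Y i j) ×ˢ (PE Y i k) ×ˢ (PE Y j k),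
          ∑ x ∈ cellBlock Y i j k Z.1 Z.2.1 Z.2.2,
            ((∑ y ∈ blockOf PV PE i j k x, (if H (y i) (y j) (y k) then (1:ℝ) else 0)) /
              ((blockOf PV PE i j k x).card : ℝ)) ^ 2 := by
    refine sum_partition _ _ _ ?_ ?_ _
    · intro Z _
      exact Finset.filter_subset _ _
    · intro x hx
      rw [Fintype.mem_piFinset] at hx
      have hmij : (x i, x j) ∈ Y i ×ˢ Y j := Finset.mem_product.mpr ⟨hx i, hx j⟩
      have hmik : (x i, x k) ∈ Y i ×ˢ Y k := Finset.mem_product.mpr ⟨hx i, hx k⟩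
      have hmjk : (x j, x k) ∈ Y j ×ˢ Y k := Finset.mem_product.mpr ⟨hx j, hx k⟩
      obtain ⟨Z, ⟨hZP, hZm⟩, hZu⟩ := cells_exu (hPE Y hY i j hij) (hPE Y hY i k hik)
        (hPE Y hY j k hjk) hmij hmik hmjk
      refine ⟨Z, ⟨hZP, ?_⟩, ?_⟩
      · rw [cellBlock, Finset.mem_filter, Fintype.mem_piFinset]
        exact ⟨hx, hZm⟩
      · rintro W ⟨hWP, hWm⟩
        rw [cellBlock, Finset.mem_filter] at hWm
        exact hZu W ⟨hWP, hWm.2⟩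
  rw [hP, Finset.sum_product]
  refine Finset.sum_congr rfl fun Zij hZij => ?_
  rw [Finset.sum_product]
  refine Finset.sum_congr rfl fun Zik hZik => ?_
  refine Finset.sum_congr rfl fun Zjk hZjk => ?_
  exact cellBlock_contrib H hPV hPE hij hjk hY hZij hZik hZjk

lemma prod_split_ijk (Y : Fin t → Finset V) {i j k : Fin t}
    (hij : i ≠ j) (hik : i ≠ k) (hjk : j ≠ k) :
    ∏ l, ((Y l).card : ℝ)
      = ((Y i).card : ℝ) * ((Y j).card : ℝ) * ((Y k).card : ℝ) *
          ∏ l ∈ ({i, j, k} : Finset (Fin t))ᶜ, ((Y l).card : ℝ) := by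
  rw [← Finset.prod_mul_prod_compl ({i, j, k} : Finset (Fin t)) (fun l => ((Y l).card : ℝ))]
  congr 1
  rw [Finset.prod_insert (by simp [hij, hik]), Finset.prod_insert (by simp [hjk]),
    Finset.prod_singleton, mul_assoc]

lemma qtriple (H : V → V → V → Prop) {X : Fin t → Finset V}
    (hX : ∀ l, ((X l).card : ℝ) ≠ 0)
    {PV : Finset (Fin t → Finset V)}
    {PE : (Fin t → Finset V) → Fin t → Fin t → Finset (Finset (V × V))}
    (hPV : IsCylPartition PV X)
    (hPE : ∀ Y ∈ PV, ∀ i j : Fin t, i < j → IsBipPartition (PE Y i j) (Y i) (Y j))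
    {i j k : Fin t} (hij : i < j) (hjk : j < k) :
    ∑ Y ∈ PV, (∏ l, ((Y l).card : ℝ) / ((X l).card : ℝ)) *
        meanSqK H (Y i) (Y j) (Y k) (PE Y i j) (PE Y i k) (PE Y j k)
      = (∏ l, ((X l).card : ℝ))⁻¹ *
          ∑ x ∈ Fintype.piFinset X,
            ((∑ y ∈ blockOf PV PE i j k x, (if H (y i) (y j) (y k) then (1:ℝ) else 0)) /
              ((blockOf PV PE i j k x).card : ℝ)) ^ 2 := by
  have hij' : i ≠ j := ne_of_lt hij
  have hik' : i ≠ k := ne_of_lt (hij.trans hjk)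
  have hjk' : j ≠ k := ne_of_lt hjk
  have hsplit : ∑ x ∈ Fintype.piFinset X,
      ((∑ y ∈ blockOf PV PE i j k x, (if H (y i) (y j) (y k) then (1:ℝ) else 0)) /
        ((blockOf PV PE i j k x).card : ℝ)) ^ 2
    = ∑ Y ∈ PV, ∑ x ∈ Fintype.piFinset Y,
        ((∑ y ∈ blockOf PV PE i j k x, (if H (y i) (y j) (y k) then (1:ℝ) else 0)) /
          ((blockOf PV PE i j k x).card : ℝ)) ^ 2 := by
    refine sum_partition _ _ _ ?_ ?_ _
    · intro Y hY x hx
      rw [Fintype.mem_piFinset] at hx ⊢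
      exact fun l => hPV.1 Y hY l (hx l)
    · intro x hx
      obtain ⟨Y, ⟨hY1, hY2⟩, hu⟩ := hPV.2 x hx
      refine ⟨Y, ⟨hY1, Fintype.mem_piFinset.mpr hY2⟩, ?_⟩
      rintro Y' ⟨h1, h2⟩
      exact hu Y' ⟨h1, Fintype.mem_piFinset.mp h2⟩
  rw [hsplit, Finset.mul_sum]
  refine Finset.sum_congr rfl fun Y hY => ?_
  rw [sum_over_cylinder H hPV hPE hij hjk hY]
  rw [meanSqK, Finset.mul_sum, Finset.mul_sum]
  refine Finset.sum_congr rfl fun Zij hZij => ?_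
  rw [Finset.mul_sum, Finset.mul_sum]
  refine Finset.sum_congr rfl fun Zik hZik => ?_
  rw [Finset.mul_sum, Finset.mul_sum]
  refine Finset.sum_congr rfl fun Zjk hZjk => ?_
  rw [cellBlock_card Y hij' hik' hjk']
  set m := ∏ l ∈ ({i, j, k} : Finset (Fin t))ᶜ, ((Y l).card : ℝ) with hm
  set NΔ := ((triangles Zij Zik Zjk (Y i) (Y j) (Y k)).card : ℝ) with hN
  set d := relDensity H Zij Zik Zjk (Y i) (Y j) (Y k) with hd
  have hw : ∏ l, ((Y l).card : ℝ) / ((X l).card : ℝ)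
      = (∏ l, ((Y l).card : ℝ)) * (∏ l, ((X l).card : ℝ))⁻¹ := by
    rw [Finset.prod_div_distrib, div_eq_mul_inv]
  rw [hw, prod_split_ijk Y hij' hik' hjk', ← hm]
  by_cases hD : ((Y i).card : ℝ) * ((Y j).card : ℝ) * ((Y k).card : ℝ) = 0
  · have hc3 : (Y i).card = 0 ∨ (Y j).card = 0 ∨ (Y k).card = 0 := by
      rcases mul_eq_zero.mp hD with h | h
      · rcases mul_eq_zero.mp h with h' | h'
        · left; exact_mod_cast h'
        · right; left; exact_mod_cast h'
      · right; right; exact_mod_cast h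
    have hprod0 : ((Y i) ×ˢ ((Y j) ×ˢ (Y k))).card = 0 := by
      rw [Finset.card_product, Finset.card_product]
      rcases hc3 with h | h | h <;> simp [h]
    have hle : (triangles Zij Zik Zjk (Y i) (Y j) (Y k)).card
        ≤ ((Y i) ×ˢ ((Y j) ×ˢ (Y k))).card :=
      Finset.card_le_card (Finset.filter_subset _ _)
    have hNΔ0 : NΔ = 0 := by
      rw [hN]
      have h0 : (triangles Zij Zik Zjk (Y i) (Y j) (Y k)).card = 0 := le_antisymm (hprod0 ▸ hle) (Nat.zero_le _)
      rw [h0]; norm_num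
    rw [hNΔ0]
    simp
  · calc ((Y i).card : ℝ) * ((Y j).card : ℝ) * ((Y k).card : ℝ) * m *
        (∏ l, ((X l).card : ℝ))⁻¹ *
        (NΔ / (((Y i).card : ℝ) * ((Y j).card : ℝ) * ((Y k).card : ℝ)) * d ^ 2)
        = (NΔ / (((Y i).card : ℝ) * ((Y j).card : ℝ) * ((Y k).card : ℝ)) *
            (((Y i).card : ℝ) * ((Y j).card : ℝ) * ((Y k).card : ℝ))) *
            (m * (∏ l, ((X l).card : ℝ))⁻¹ * d ^ 2) := by ring
      _ = NΔ * (m * (∏ l, ((X l).card : ℝ))⁻¹ * d ^ 2) := by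
          rw [div_mul_cancel₀ _ hD]
      _ = (∏ l, ((X l).card : ℝ))⁻¹ * (m * NΔ * d ^ 2) := by ring
end AuxIdentity
section AuxBounds
variable {V : Type} [DecidableEq V] [Fintype V] {t : ℕ}

lemma meanSqK_nonneg (H : V → V → V → Prop) (Yi Yj Yk : Finset V)
    (Pij Pik Pjk : Finset (Finset (V × V))) :
    0 ≤ meanSqK H Yi Yj Yk Pij Pik Pjk := by
  refine Finset.sum_nonneg fun Zij _ => Finset.sum_nonneg fun Zik _ =>
    Finset.sum_nonneg fun Zjk _ => ?_
  exact mul_nonneg (div_nonneg (Nat.cast_nonneg _)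
    (by positivity)) (sq_nonneg _)

lemma meanSqK_le_one (H : V → V → V → Prop) {Yi Yj Yk : Finset V}
    {Pij Pik Pjk : Finset (Finset (V × V))}
    (hij : IsBipPartition Pij Yi Yj) (hik : IsBipPartition Pik Yi Yk)
    (hjk : IsBipPartition Pjk Yj Yk) :
    meanSqK H Yi Yj Yk Pij Pik Pjk ≤ 1 := by
  set D : ℝ := (Yi.card : ℝ) * (Yj.card : ℝ) * (Yk.card : ℝ) with hD
  have hD0 : 0 ≤ D := by positivity
  have hsum : ∑ Z ∈ Pij ×ˢ Pik ×ˢ Pjk, ((triangles Z.1 Z.2.1 Z.2.2 Yi Yj Yk).card : ℝ)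
      = ((Yi ×ˢ (Yj ×ˢ Yk)).card : ℝ) := by
    have h := sum_partition (Yi ×ˢ (Yj ×ˢ Yk)) (Pij ×ˢ Pik ×ˢ Pjk)
      (fun Z => triangles Z.1 Z.2.1 Z.2.2 Yi Yj Yk) ?_ ?_ (fun _ => (1:ℝ))
    · simpa using h.symm
    · intro Z _
      exact Finset.filter_subset _ _
    · intro p hp
      rw [Finset.mem_product, Finset.mem_product] at hp
      have hmij : (p.1, p.2.1) ∈ Yi ×ˢ Yj := Finset.mem_product.mpr ⟨hp.1, hp.2.1⟩
      have hmik : (p.1, p.2.2) ∈ Yi ×ˢ Yk := Finset.mem_product.mpr ⟨hp.1, hp.2.2⟩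
      have hmjk : (p.2.1, p.2.2) ∈ Yj ×ˢ Yk := Finset.mem_product.mpr ⟨hp.2.1, hp.2.2⟩
      obtain ⟨Z, ⟨hZP, hZm⟩, hZu⟩ := cells_exu hij hik hjk hmij hmik hmjk
      refine ⟨Z, ⟨hZP, ?_⟩, ?_⟩
      · simp only [triangles, Finset.mem_filter]
        exact ⟨Finset.mem_product.mpr ⟨hp.1, Finset.mem_product.mpr ⟨hp.2.1, hp.2.2⟩⟩, hZm⟩
      · rintro W ⟨hWP, hWm⟩
        simp only [triangles, Finset.mem_filter] at hWm
        exact hZu W ⟨hWP, hWm.2⟩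
  have hcard : ((Yi ×ˢ (Yj ×ˢ Yk)).card : ℝ) = D := by
    rw [Finset.card_product, Finset.card_product]
    push_cast
    rw [hD, mul_assoc]
  calc meanSqK H Yi Yj Yk Pij Pik Pjk
      ≤ ∑ Zij ∈ Pij, ∑ Zik ∈ Pik, ∑ Zjk ∈ Pjk,
          ((triangles Zij Zik Zjk Yi Yj Yk).card : ℝ) / D := by
        refine Finset.sum_le_sum fun Zij _ => Finset.sum_le_sum fun Zik _ =>
          Finset.sum_le_sum fun Zjk _ => ?_
        have hd1 : relDensity H Zij Zik Zjk Yi Yj Yk ^ 2 ≤ 1 :=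
          pow_le_one₀ (relDensity_nonneg H Zij Zik Zjk Yi Yj Yk)
            (relDensity_le_one H Zij Zik Zjk Yi Yj Yk)
        exact mul_le_of_le_one_right (div_nonneg (Nat.cast_nonneg _) hD0) hd1
    _ = (∑ Z ∈ Pij ×ˢ Pik ×ˢ Pjk, ((triangles Z.1 Z.2.1 Z.2.2 Yi Yj Yk).card : ℝ)) / D := by
        rw [Finset.sum_product, Finset.sum_div]
        refine Finset.sum_congr rfl fun Zij _ => ?_
        rw [Finset.sum_product, Finset.sum_div]
        refine Finset.sum_congr rfl fun Zik _ => ?_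
        rw [Finset.sum_div]
    _ = D / D := by rw [hsum, hcard]
    _ ≤ 1 := div_le_one_of_le₀ le_rfl hD0

lemma weight_nonneg (X Y : Fin t → Finset V) :
    0 ≤ ∏ l, ((Y l).card : ℝ) / ((X l).card : ℝ) :=
  Finset.prod_nonneg fun l _ => div_nonneg (Nat.cast_nonneg _) (Nat.cast_nonneg _)

lemma sum_weights_le_one {X : Fin t → Finset V} {PV : Finset (Fin t → Finset V)}
    (hPV : IsCylPartition PV X) :
    ∑ Y ∈ PV, ∏ l, ((Y l).card : ℝ) / ((X l).card : ℝ) ≤ 1 := by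
  by_cases hX : ∀ l, ((X l).card : ℝ) ≠ 0
  · have hpi : ∑ Y ∈ PV, ((Fintype.piFinset Y).card : ℝ)
        = ((Fintype.piFinset X).card : ℝ) := by
      have h := sum_partition (Fintype.piFinset X) PV (fun Y => Fintype.piFinset Y)
        ?_ ?_ (fun _ => (1:ℝ))
      · simpa using h.symm
      · intro Y hY x hx
        rw [Fintype.mem_piFinset] at hx ⊢
        exact fun l => hPV.1 Y hY l (hx l)
      · intro x hx
        obtain ⟨Y, ⟨hY1, hY2⟩, hu⟩ := hPV.2 x hx
        refine ⟨Y, ⟨hY1, Fintype.mem_piFinset.mpr hY2⟩, ?_⟩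
        rintro Y' ⟨h1, h2⟩
        exact hu Y' ⟨h1, Fintype.mem_piFinset.mp h2⟩
    have hprodY : ∀ Y : Fin t → Finset V,
        (∏ l, ((Y l).card : ℝ)) = ((Fintype.piFinset Y).card : ℝ) := by
      intro Y
      rw [Fintype.card_piFinset]
      push_cast
      rfl
    have heq : ∑ Y ∈ PV, ∏ l, ((Y l).card : ℝ) / ((X l).card : ℝ)
        = (∑ Y ∈ PV, ((Fintype.piFinset Y).card : ℝ)) / (∏ l, ((X l).card : ℝ)) := by
      rw [Finset.sum_div]
      refine Finset.sum_congr rfl fun Y _ => ?_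
      rw [Finset.prod_div_distrib, hprodY Y]
    rw [heq, hpi, ← hprodY X]
    exact div_le_one_of_le₀ le_rfl (Finset.prod_nonneg fun l _ => Nat.cast_nonneg _)
  · push_neg at hX
    obtain ⟨l, hl⟩ := hX
    have hz : ∀ Y ∈ PV, ∏ m, ((Y m).card : ℝ) / ((X m).card : ℝ) = 0 := by
      intro Y _
      refine Finset.prod_eq_zero (Finset.mem_univ l) ?_
      rw [hl, div_zero]
    rw [Finset.sum_congr rfl hz, Finset.sum_const, smul_zero]
    norm_num

lemma card_triples_le (t : ℕ) :
    (((Finset.univ : Finset (Fin t × Fin t × Fin t)).filter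
        (fun p => p.1 < p.2.1 ∧ p.2.1 < p.2.2)).card : ℝ) ≤ (t.choose 3 : ℝ) := by
  have h : ((Finset.univ : Finset (Fin t × Fin t × Fin t)).filter
        (fun p => p.1 < p.2.1 ∧ p.2.1 < p.2.2)).card
      ≤ (Finset.powersetCard 3 (Finset.univ : Finset (Fin t))).card := by
    apply Finset.card_le_card_of_injOn (fun p => ({p.1, p.2.1, p.2.2} : Finset (Fin t)))
    · intro p hp
      rw [Finset.mem_coe, Finset.mem_filter] at hp
      obtain ⟨-, h1, h2⟩ := hp
      rw [Finset.mem_coe, Finset.mem_powersetCard]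
      refine ⟨Finset.subset_univ _, ?_⟩
      rw [Finset.card_eq_three]
      exact ⟨p.1, p.2.1, p.2.2, ne_of_lt h1, ne_of_lt (h1.trans h2), ne_of_lt h2, rfl⟩
    · rintro ⟨a, b, c⟩ hp ⟨d, e, f⟩ hq he
      simp only [Finset.coe_filter, Set.mem_setOf_eq, Finset.mem_univ, true_and] at hp hq
      obtain ⟨hab, hbc⟩ := hp
      obtain ⟨hde, hef⟩ := hq
      simp only at he
      have hmem : ∀ x : Fin t, (x = a ∨ x = b ∨ x = c) ↔ (x = d ∨ x = e ∨ x = f) := by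
        intro x
        constructor
        · intro hx
          have : x ∈ ({d, e, f} : Finset (Fin t)) := by
            rw [← he]
            simp only [Finset.mem_insert, Finset.mem_singleton]
            exact hx
          simpa only [Finset.mem_insert, Finset.mem_singleton] using this
        · intro hx
          have : x ∈ ({a, b, c} : Finset (Fin t)) := by
            rw [he]
            simp only [Finset.mem_insert, Finset.mem_singleton]
            exact hx
          simpa only [Finset.mem_insert, Finset.mem_singleton] using this
      have had : a = d := by
        have h1 : a = d ∨ a = e ∨ a = f := (hmem a).mp (Or.inl rfl)
        have h2 : d = a ∨ d = b ∨ d = c := (hmem d).mpr (Or.inl rfl)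
        have hle1 : d ≤ a := by
          rcases h1 with h | h | h
          · exact h ▸ le_refl _
          · exact h ▸ hde.le
          · exact h ▸ (hde.trans hef).le
        have hle2 : a ≤ d := by
          rcases h2 with h | h | h
          · exact h ▸ le_refl _
          · exact h ▸ hab.le
          · exact h ▸ (hab.trans hbc).le
        exact le_antisymm hle2 hle1
      have hcf : c = f := by
        have h1 : c = d ∨ c = e ∨ c = f := (hmem c).mp (Or.inr (Or.inr rfl))
        have h2 : f = a ∨ f = b ∨ f = c := (hmem f).mpr (Or.inr (Or.inr rfl))
        have hle1 : c ≤ f := by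
          rcases h1 with h | h | h
          · exact h ▸ (hde.trans hef).le
          · exact h ▸ hef.le
          · exact h ▸ le_refl _
        have hle2 : f ≤ c := by
          rcases h2 with h | h | h
          · exact h ▸ (hab.trans hbc).le
          · exact h ▸ hbc.le
          · exact h ▸ le_refl _
        exact le_antisymm hle1 hle2
      have hbe : b = e := by
        have h1 : b = d ∨ b = e ∨ b = f := (hmem b).mp (Or.inr (Or.inl rfl))
        rcases h1 with h | h | h
        · exfalso; rw [h, ← had] at hab; exact lt_irrefl a hab
        · exact h
        · exfalso; rw [← hcf] at h; rw [h] at hbc; exact lt_irrefl c hbc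
      rw [had, hbe, hcf]
  calc (((Finset.univ : Finset (Fin t × Fin t × Fin t)).filter
        (fun p => p.1 < p.2.1 ∧ p.2.1 < p.2.2)).card : ℝ)
      ≤ ((Finset.powersetCard 3 (Finset.univ : Finset (Fin t))).card : ℝ) := Nat.cast_le.mpr h
    _ = (t.choose 3 : ℝ) := by
        rw [Finset.card_powersetCard, Finset.card_univ, Fintype.card_fin]

end AuxBounds

/-- (i) 0 ≤ q(P) ≤ C(t,3); (ii) q is monotone under refinement of cylinder chain partitions. -/
theorem qP_bounds_and_monotone (t : ℕ) (ht : 3 ≤ t) (V : Type) [Fintype V] [DecidableEq V]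
    (X : Fin t → Finset V) (hdisj : ∀ i j : Fin t, i ≠ j → Disjoint (X i) (X j))
    (H : V → V → V → Prop)
    (hsym1 : ∀ x y z, H x y z ↔ H y x z) (hsym2 : ∀ x y z, H x y z ↔ H x z y)
    (PV : Finset (Fin t → Finset V))
    (PE : (Fin t → Finset V) → Fin t → Fin t → Finset (Finset (V × V)))
    (hPV : IsCylPartition PV X)
    (hPE : ∀ Y ∈ PV, ∀ i j : Fin t, i < j → IsBipPartition (PE Y i j) (Y i) (Y j)) :
    (0 ≤ qP H X PV PE ∧ qP H X PV PE ≤ (t.choose 3 : ℝ)) ∧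
    ∀ (PV' : Finset (Fin t → Finset V))
      (PE' : (Fin t → Finset V) → Fin t → Fin t → Finset (Finset (V × V))),
      IsCylPartition PV' X →
      (∀ Y ∈ PV', ∀ i j : Fin t, i < j → IsBipPartition (PE' Y i j) (Y i) (Y j)) →
      CylRefines PV' PV PE' PE →
      qP H X PV PE ≤ qP H X PV' PE' := by
  classical
  constructor
  · constructor
    · rw [qP]
      refine Finset.sum_nonneg fun Y hY => mul_nonneg (weight_nonneg X Y) ?_
      exact Finset.sum_nonneg fun p _ => meanSqK_nonneg H _ _ _ _ _ _
    · rw [qP]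
      set N := ((Finset.univ : Finset (Fin t × Fin t × Fin t)).filter
        (fun p => p.1 < p.2.1 ∧ p.2.1 < p.2.2)).card with hN
      have step1 : ∑ Y ∈ PV, (∏ i, ((Y i).card : ℝ) / ((X i).card : ℝ)) *
            ∑ p ∈ Finset.univ.filter
              (fun p : Fin t × Fin t × Fin t => p.1 < p.2.1 ∧ p.2.1 < p.2.2),
              meanSqK H (Y p.1) (Y p.2.1) (Y p.2.2)
                (PE Y p.1 p.2.1) (PE Y p.1 p.2.2) (PE Y p.2.1 p.2.2)
          ≤ ∑ Y ∈ PV, (∏ i, ((Y i).card : ℝ) / ((X i).card : ℝ)) * (N : ℝ) := by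
        refine Finset.sum_le_sum fun Y hY => ?_
        refine mul_le_mul_of_nonneg_left ?_ (weight_nonneg X Y)
        calc ∑ p ∈ Finset.univ.filter
              (fun p : Fin t × Fin t × Fin t => p.1 < p.2.1 ∧ p.2.1 < p.2.2),
              meanSqK H (Y p.1) (Y p.2.1) (Y p.2.2)
                (PE Y p.1 p.2.1) (PE Y p.1 p.2.2) (PE Y p.2.1 p.2.2)
            ≤ ∑ p ∈ Finset.univ.filter
              (fun p : Fin t × Fin t × Fin t => p.1 < p.2.1 ∧ p.2.1 < p.2.2), (1:ℝ) := by
              refine Finset.sum_le_sum fun p hp => ?_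
              rw [Finset.mem_filter] at hp
              obtain ⟨-, h1, h2⟩ := hp
              exact meanSqK_le_one H (hPE Y hY _ _ h1) (hPE Y hY _ _ (h1.trans h2))
                (hPE Y hY _ _ h2)
          _ = (N : ℝ) := by rw [Finset.sum_const, nsmul_eq_mul, mul_one]
      calc ∑ Y ∈ PV, (∏ i, ((Y i).card : ℝ) / ((X i).card : ℝ)) *
            ∑ p ∈ Finset.univ.filter
              (fun p : Fin t × Fin t × Fin t => p.1 < p.2.1 ∧ p.2.1 < p.2.2),
              meanSqK H (Y p.1) (Y p.2.1) (Y p.2.2)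
                (PE Y p.1 p.2.1) (PE Y p.1 p.2.2) (PE Y p.2.1 p.2.2)
          ≤ ∑ Y ∈ PV, (∏ i, ((Y i).card : ℝ) / ((X i).card : ℝ)) * (N : ℝ) := step1
        _ = (N : ℝ) * ∑ Y ∈ PV, ∏ i, ((Y i).card : ℝ) / ((X i).card : ℝ) := by
            rw [Finset.mul_sum]
            exact Finset.sum_congr rfl fun Y _ => mul_comm _ _
        _ ≤ (N : ℝ) * 1 :=
            mul_le_mul_of_nonneg_left (sum_weights_le_one hPV) (Nat.cast_nonneg _)
        _ = (N : ℝ) := mul_one _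
        _ ≤ (t.choose 3 : ℝ) := card_triples_le t
  · intro PV' PE' hPV' hPE' hrefine
    by_cases hX : ∀ l, ((X l).card : ℝ) ≠ 0
    · have hq : ∀ (QV : Finset (Fin t → Finset V))
          (QE : (Fin t → Finset V) → Fin t → Fin t → Finset (Finset (V × V))),
          IsCylPartition QV X →
          (∀ Y ∈ QV, ∀ i j : Fin t, i < j → IsBipPartition (QE Y i j) (Y i) (Y j)) →
          qP H X QV QE = ∑ p ∈ Finset.univ.filter
              (fun p : Fin t × Fin t × Fin t => p.1 < p.2.1 ∧ p.2.1 < p.2.2),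
            (∏ l, ((X l).card : ℝ))⁻¹ *
              ∑ x ∈ Fintype.piFinset X,
                ((∑ y ∈ blockOf QV QE p.1 p.2.1 p.2.2 x,
                    (if H (y p.1) (y p.2.1) (y p.2.2) then (1:ℝ) else 0)) /
                  ((blockOf QV QE p.1 p.2.1 p.2.2 x).card : ℝ)) ^ 2 := by
        intro QV QE hQV hQE
        rw [qP]
        calc ∑ Y ∈ QV, (∏ i, ((Y i).card : ℝ) / ((X i).card : ℝ)) *
              ∑ p ∈ Finset.univ.filter
                (fun p : Fin t × Fin t × Fin t => p.1 < p.2.1 ∧ p.2.1 < p.2.2),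
                meanSqK H (Y p.1) (Y p.2.1) (Y p.2.2)
                  (QE Y p.1 p.2.1) (QE Y p.1 p.2.2) (QE Y p.2.1 p.2.2)
            = ∑ Y ∈ QV, ∑ p ∈ Finset.univ.filter
                (fun p : Fin t × Fin t × Fin t => p.1 < p.2.1 ∧ p.2.1 < p.2.2),
                (∏ i, ((Y i).card : ℝ) / ((X i).card : ℝ)) *
                meanSqK H (Y p.1) (Y p.2.1) (Y p.2.2)
                  (QE Y p.1 p.2.1) (QE Y p.1 p.2.2) (QE Y p.2.1 p.2.2) :=
              Finset.sum_congr rfl fun Y _ => Finset.mul_sum _ _ _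
          _ = ∑ p ∈ Finset.univ.filter
                (fun p : Fin t × Fin t × Fin t => p.1 < p.2.1 ∧ p.2.1 < p.2.2),
                ∑ Y ∈ QV, (∏ i, ((Y i).card : ℝ) / ((X i).card : ℝ)) *
                meanSqK H (Y p.1) (Y p.2.1) (Y p.2.2)
                  (QE Y p.1 p.2.1) (QE Y p.1 p.2.2) (QE Y p.2.1 p.2.2) := Finset.sum_comm
          _ = ∑ p ∈ Finset.univ.filter
                (fun p : Fin t × Fin t × Fin t => p.1 < p.2.1 ∧ p.2.1 < p.2.2),
              (∏ l, ((X l).card : ℝ))⁻¹ *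
                ∑ x ∈ Fintype.piFinset X,
                  ((∑ y ∈ blockOf QV QE p.1 p.2.1 p.2.2 x,
                      (if H (y p.1) (y p.2.1) (y p.2.2) then (1:ℝ) else 0)) /
                    ((blockOf QV QE p.1 p.2.1 p.2.2 x).card : ℝ)) ^ 2 := by
              refine Finset.sum_congr rfl fun p hp => ?_
              rw [Finset.mem_filter] at hp
              exact qtriple H hX hQV hQE hp.2.1 hp.2.2
      rw [hq PV PE hPV hPE, hq PV' PE' hPV' hPE']
      refine Finset.sum_le_sum fun p hp => ?_
      rw [Finset.mem_filter] at hp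
      obtain ⟨-, h1, h2⟩ := hp
      refine mul_le_mul_of_nonneg_left ?_
        (inv_nonneg.mpr (Finset.prod_nonneg fun l _ => Nat.cast_nonneg _))
      exact refine_sq_le (Fintype.piFinset X)
        (fun y => if H (y p.1) (y p.2.1) (y p.2.2) then (1:ℝ) else 0)
        (fun x => blockOf PV PE p.1 p.2.1 p.2.2 x)
        (fun x => blockOf PV' PE' p.1 p.2.1 p.2.2 x)
        (fun x hx => blockOf_self hPV hPE h1 h2 hx)
        (fun x hx => blockOf_subset hPV hx)
        (fun x hx y hy => blockOf_const hPV hPE h1 h2 hx hy)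
        (fun x hx => blockOf_self hPV' hPE' h1 h2 hx)
        (fun x hx y hy => blockOf_const hPV' hPE' h1 h2 hx hy)
        (fun x hx => blockOf_refine hPV hPE hPV' hPE' hrefine h1 h2 hx)
    · push_neg at hX
      obtain ⟨l, hl⟩ := hX
      have hz : ∀ (QV : Finset (Fin t → Finset V))
          (QE : (Fin t → Finset V) → Fin t → Fin t → Finset (Finset (V × V))),
          qP H X QV QE = 0 := by
        intro QV QE
        rw [qP]
        refine Finset.sum_eq_zero fun Y _ => ?_
        rw [Finset.prod_eq_zero (Finset.mem_univ l) (by rw [hl, div_zero]), zero_mul]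
      rw [hz PV PE, hz PV' PE']
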